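/- Let X be a d-space possessing an initial state, i.e., a point a₀ ∈ X such that for every x ∈ X there is a dipath from a₀ to x. If the dipath space map χ : PX → X × X admits a continuous section s : Γ_X → PX, then the map s'(a,b) = (s(a₀,a))⁻¹ * s(a₀,b) (concatenation of the reverse of s(a₀,a) with s(a₀,b)) is a continuous section, defined on all of X × X, of the ordinary endpoint map of the free path space of X; consequently the underlying topological space of X is contractible. -/

import Mathlib

open unitInterval

/-- A d-space structure on a topological space `X`: a distinguished set of
continuous maps `I → X` (the *dipaths*) containing the constants and closed
under monotone reparametrization and concatenation. -/
structure DirectedSpace (X : Type*) [TopologicalSpace X] where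
  dipaths : Set C(I, X)
  const_mem : ∀ x : X, ContinuousMap.const I x ∈ dipaths
  reparam_mem : ∀ p ∈ dipaths, ∀ φ : C(I, I), Monotone φ → p.comp φ ∈ dipaths
  trans_mem : ∀ {x y z : X} (γ : Path x y) (γ' : Path y z),
      γ.toContinuousMap ∈ dipaths → γ'.toContinuousMap ∈ dipaths →
      (γ.trans γ').toContinuousMap ∈ dipaths

variable {X : Type*} {Y : Type*} {Z : Type*}
variable [TopologicalSpace X] [TopologicalSpace Y] [TopologicalSpace Z]

/-- `PX(a,b)`: the set of dipaths from `a` to `b` (as a subspace of `C(I,X)`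
with the compact-open topology). -/
def DiPaths (D : DirectedSpace X) (a b : X) : Set C(I, X) :=
  {p | p ∈ D.dipaths ∧ p 0 = a ∧ p 1 = b}

/-- `Γ_X`: pairs of points joined by a dipath. -/
def DGamma (D : DirectedSpace X) : Set (X × X) :=
  {z | ∃ p : C(I, X), p ∈ DiPaths D z.1 z.2}

/-- A dmap between d-spaces. -/
structure DMap (D : DirectedSpace X) (E : DirectedSpace Y) where
  toCM : C(X, Y)
  maps_dipaths : ∀ p ∈ D.dipaths, toCM.comp p ∈ E.dipaths

/-- Composition of dmaps. -/
def DMap.comp' {D : DirectedSpace X} {E : DirectedSpace Y} {F : DirectedSpace Z}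
    (f₂ : DMap E F) (f₁ : DMap D E) : DMap D F where
  toCM := f₂.toCM.comp f₁.toCM
  maps_dipaths := fun p hp => by
    rw [ContinuousMap.comp_assoc]
    exact f₂.maps_dipaths _ (f₁.maps_dipaths p hp)

/-- The map `Pf_{a,b} : PX(a,b) → PY(f a, f b)` induced by a dmap, as a
continuous map (jointly continuous in the path; bigraded in `a, b`). -/
noncomputable def DMap.pmap {D : DirectedSpace X} {E : DirectedSpace Y}
    (f : DMap D E) (a b : X) :
    C(↥(DiPaths D a b), ↥(DiPaths E (f.toCM a) (f.toCM b))) where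
  toFun p := ⟨f.toCM.comp p.val, f.maps_dipaths _ p.2.1,
    by simp [p.2.2.1], by simp [p.2.2.2]⟩
  continuous_toFun := Continuous.subtype_mk
    ((ContinuousMap.continuous_postcomp f.toCM).comp continuous_subtype_val) _

lemma DMap.gamma_mem {D : DirectedSpace X} {E : DirectedSpace Y} (f : DMap D E)
    {a b : X} (h : (a, b) ∈ DGamma D) : (f.toCM a, f.toCM b) ∈ DGamma E := by
  obtain ⟨p, hp, h0, h1⟩ := h
  exact ⟨f.toCM.comp p, f.maps_dipaths p hp, by simp [h0], by simp [h1]⟩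

lemma DMap.map_path_mem {D : DirectedSpace X} {E : DirectedSpace Y} (f : DMap D E)
    {x y : X} (γ : Path x y) (h : γ.toContinuousMap ∈ D.dipaths) :
    (γ.map f.toCM.continuous).toContinuousMap ∈ E.dipaths := by
  have : (γ.map f.toCM.continuous).toContinuousMap = f.toCM.comp γ.toContinuousMap := by
    ext t; rfl
  rw [this]
  exact f.maps_dipaths _ h

/-- A dipath (as an element of a dipath space) regarded as a `Path`. -/
def diToPath {D : DirectedSpace X} {a b : X} (p : ↥(DiPaths D a b)) : Path a b where
  toContinuousMap := p.val
  source' := p.2.2.1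
  target' := p.2.2.2

/-- A `Path` consisting of dipaths regarded as an element of a dipath space. -/
def Path.toDi {D : DirectedSpace X} {a b : X} (γ : Path a b)
    (h : γ.toContinuousMap ∈ D.dipaths) : ↥(DiPaths D a b) :=
  ⟨γ.toContinuousMap, h, γ.source, γ.target⟩

/-- The extension map `PX(α,β) : PX(a,b) → PX(a',b')`, `p ↦ α * p * β`, for
`α` a dipath from `a'` to `a` and `β` a dipath from `b` to `b'`. -/
noncomputable def extCM (D : DirectedSpace X) {a b a' b' : X}
    (α : Path a' a) (β : Path b b')
    (hα : α.toContinuousMap ∈ D.dipaths) (hβ : β.toContinuousMap ∈ D.dipaths) :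
    C(↥(DiPaths D a b), ↥(DiPaths D a' b')) where
  toFun p := ⟨((α.trans (diToPath p)).trans β).toContinuousMap,
    D.trans_mem _ _ (D.trans_mem _ _ hα p.2.1) hβ,
    Path.source _, Path.target _⟩
  continuous_toFun := by
    apply Continuous.subtype_mk
    apply continuous_induced_dom.comp
    have h1 : Continuous fun p : ↥(DiPaths D a b) => diToPath p :=
      continuous_induced_rng.mpr continuous_subtype_val
    exact ((continuous_const.path_trans h1).path_trans continuous_const)

/-- A pair of continuous maps forming a homotopy equivalence. -/
def IsHomotopyEquivPair {A B : Type*} [TopologicalSpace A] [TopologicalSpace B]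
    (u : C(A, B)) (v : C(B, A)) : Prop :=
  (v.comp u).Homotopic (ContinuousMap.id A) ∧ (u.comp v).Homotopic (ContinuousMap.id B)

/-- The total space `PY^f` of dipaths of `Y` between images under `f` of pairs
in `Γ_X`, together with the grading pair. -/
def OverPaths {D : DirectedSpace X} {E : DirectedSpace Y} (f : DMap D E) :
    Set ((X × X) × C(I, Y)) :=
  {z | z.1 ∈ DGamma D ∧ z.2 ∈ DiPaths E (f.toCM z.1.1) (f.toCM z.1.2)}

/-- A continuously bigraded map `F : PY^f → PX`, with
`F_{a,b} : PY(f a, f b) → PX(a,b)`; continuity is joint in the grading and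
in the path. -/
structure Bigraded {D : DirectedSpace X} {E : DirectedSpace Y} (f : DMap D E) where
  toCM : C(↥(OverPaths f), C(I, X))
  mem : ∀ z : ↥(OverPaths f), toCM z ∈ DiPaths D z.val.1.1 z.val.1.2

/-- The slice `F_{a,b} : PY(f a, f b) → PX(a,b)` of a continuously bigraded map. -/
noncomputable def Bigraded.slice {D : DirectedSpace X} {E : DirectedSpace Y}
    {f : DMap D E} (F : Bigraded f) {a b : X} (hab : (a, b) ∈ DGamma D) :
    C(↥(DiPaths E (f.toCM a) (f.toCM b)), ↥(DiPaths D a b)) where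
  toFun p := ⟨F.toCM ⟨((a, b), p.val), hab, p.2⟩, F.mem _⟩
  continuous_toFun := by
    apply Continuous.subtype_mk
    exact F.toCM.continuous.comp
      (Continuous.subtype_mk (continuous_const.prodMk continuous_subtype_val) _)
/-- The dipath selected by a section of the dipath space map, as a `Path`. -/
def secPath {X : Type*} [TopologicalSpace X] (D : DirectedSpace X)
    (s : ↥(DGamma D) → C(I, X))
    (hsec : ∀ z : ↥(DGamma D), s z ∈ DiPaths D z.val.1 z.val.2)
    (z : ↥(DGamma D)) : Path z.val.1 z.val.2 where
  toContinuousMap := s z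
  source' := (hsec z).2.1
  target' := (hsec z).2.2

/-- If a d-space has an initial state `a₀` and the dipath space map admits a
continuous section `s`, then `s'(a,b) = (s(a₀,a))⁻¹ * s(a₀,b)` is a continuous
section, defined on all of `X × X`, of the endpoint map of the free path
space; consequently the underlying space is contractible. -/
theorem initial_state_section_contractible
    {X : Type*} [TopologicalSpace X] (D : DirectedSpace X)
    (a₀ : X) (hinit : ∀ x : X, (a₀, x) ∈ DGamma D)
    (s : ↥(DGamma D) → C(I, X)) (hs : Continuous s)
    (hsec : ∀ z : ↥(DGamma D), s z ∈ DiPaths D z.val.1 z.val.2) :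
    ∀ s' : X × X → C(I, X),
      s' = (fun ab : X × X =>
        ((secPath D s hsec ⟨(a₀, ab.1), hinit ab.1⟩).symm.trans
          (secPath D s hsec ⟨(a₀, ab.2), hinit ab.2⟩)).toContinuousMap) →
      (Continuous s' ∧ (∀ ab : X × X, s' ab 0 = ab.1 ∧ s' ab 1 = ab.2) ∧
        ContractibleSpace X) := by
  intro s' hs'
  have hsa : ∀ x : X, (s ⟨(a₀, x), hinit x⟩) 0 = a₀ := fun x => (hsec _).2.1
  have hcont : Continuous s' := by
    subst hs'
    apply ContinuousMap.continuous_of_continuous_uncurry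
    have heq : (Function.uncurry fun (ab : X × X) (t : I) =>
        (((secPath D s hsec ⟨(a₀, ab.1), hinit ab.1⟩).symm.trans
          (secPath D s hsec ⟨(a₀, ab.2), hinit ab.2⟩)).toContinuousMap) t)
        = fun z : (X × X) × I =>
          if ((z.2 : ℝ)) ≤ 1 / 2 then
            (s ⟨(a₀, z.1.1), hinit z.1.1⟩) (σ (Set.projIcc (0:ℝ) 1 zero_le_one (2 * (z.2 : ℝ))))
          else
            (s ⟨(a₀, z.1.2), hinit z.1.2⟩) (Set.projIcc (0:ℝ) 1 zero_le_one (2 * (z.2 : ℝ) - 1)) := by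
      funext z
      obtain ⟨ab, t⟩ := z
      show ((secPath D s hsec ⟨(a₀, ab.1), hinit ab.1⟩).symm.trans
          (secPath D s hsec ⟨(a₀, ab.2), hinit ab.2⟩)) t = _
      rw [Path.trans_apply]
      split_ifs with h
      · have hmem : 2 * (t : ℝ) ∈ Set.Icc (0:ℝ) 1 :=
          (unitInterval.mul_pos_mem_iff zero_lt_two).2 ⟨t.2.1, h⟩
        rw [Set.projIcc_of_mem _ hmem]
        rfl
      · have hmem : 2 * (t : ℝ) - 1 ∈ Set.Icc (0:ℝ) 1 :=
          unitInterval.two_mul_sub_one_mem_iff.2 ⟨(not_le.1 h).le, t.2.2⟩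
        rw [Set.projIcc_of_mem _ hmem]
        rfl
    rw [heq]
    apply Continuous.if_le
    · exact continuous_eval.comp <| Continuous.prodMk
        (hs.comp <| Continuous.subtype_mk
          (continuous_const.prodMk (continuous_fst.fst)) _)
        (unitInterval.continuous_symm.comp <| (continuous_projIcc (h := zero_le_one)).comp <|
          (continuous_const.mul (continuous_subtype_val.comp continuous_snd)))
    · exact continuous_eval.comp <| Continuous.prodMk
        (hs.comp <| Continuous.subtype_mk
          (continuous_const.prodMk (continuous_fst.snd)) _)
        ((continuous_projIcc (h := zero_le_one)).comp <|
          ((continuous_const.mul (continuous_subtype_val.comp continuous_snd)).sub continuous_const))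
    · exact continuous_subtype_val.comp continuous_snd
    · exact continuous_const
    · intro z hz
      rw [hz]
      norm_num
      rw [hsa z.1.1, hsa z.1.2]
  have hend : ∀ ab : X × X, s' ab 0 = ab.1 ∧ s' ab 1 = ab.2 := by
    intro ab
    rw [hs']
    exact ⟨Path.source _, Path.target _⟩
  refine ⟨hcont, hend, ?_⟩
  rw [contractible_iff_id_nullhomotopic]
  refine ⟨a₀, ⟨⟨⟨fun p => s' (p.2, a₀) p.1, ?_⟩, ?_, ?_⟩⟩⟩
  · exact continuous_eval.comp <| Continuous.prodMk
      (hcont.comp (continuous_snd.prodMk continuous_const)) continuous_fst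
  · exact fun x => (hend (x, a₀)).1
  · exact fun x => (hend (x, a₀)).2
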